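/- Let n ≥ 2, let v ∈ ℝⁿ satisfy η(v,v) = −1, and let ρ, P ∈ ℝ. The perfect-fluid stress tensor contracted with a vector t is T(t,t) = (ρ + P)·η(v,t)² + P·η(t,t). Then T(t,t) ≥ 0 for every timelike vector t ∈ ℝⁿ if and only if ρ ≥ 0 and ρ + P ≥ 0. That is, a perfect fluid satisfies the weak energy condition exactly when ρ ≥ 0 and ρ + P ≥ 0. -/
import Mathlib


open scoped BigOperators

set_option maxHeartbeats 1000000

/-- The Minkowski bilinear form on `ℝⁿ`: `η(x,y) = -x₀y₀ + ∑_{i≥1} xᵢyᵢ`. -/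
def minkowski {n : ℕ} (x y : Fin n → ℝ) : ℝ :=
  ∑ i : Fin n, (if (i : ℕ) = 0 then (-1 : ℝ) else 1) * x i * y i

lemma mink_comm {n : ℕ} (x y : Fin n → ℝ) : minkowski x y = minkowski y x :=
  Finset.sum_congr rfl fun i _ => by ring

lemma mink_self_comb {n : ℕ} (x y : Fin n → ℝ) (s : ℝ) :
    minkowski (fun i => x i + s * y i) (fun i => x i + s * y i)
      = minkowski x x + 2 * s * minkowski x y + s ^ 2 * minkowski y y := by
  unfold minkowski
  rw [Finset.mul_sum, Finset.mul_sum, ← Finset.sum_add_distrib, ← Finset.sum_add_distrib]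
  exact Finset.sum_congr rfl fun i _ => by ring

lemma mink_right_comb {n : ℕ} (v x y : Fin n → ℝ) (s : ℝ) :
    minkowski v (fun i => x i + s * y i) = minkowski v x + s * minkowski v y := by
  unfold minkowski
  rw [Finset.mul_sum, ← Finset.sum_add_distrib]
  exact Finset.sum_congr rfl fun i _ => by ring

lemma mink_expand {n : ℕ} (hn : 0 < n) (x y : Fin n → ℝ) :
    minkowski x y = -(x ⟨0, hn⟩ * y ⟨0, hn⟩)
      + ∑ i ∈ Finset.univ.filter (fun i : Fin n => (i : ℕ) ≠ 0), x i * y i := by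
  unfold minkowski
  rw [← Finset.sum_filter_add_sum_filter_not Finset.univ (fun i : Fin n => (i : ℕ) = 0)]
  congr 1
  · have hset : Finset.univ.filter (fun i : Fin n => (i : ℕ) = 0) = {(⟨0, hn⟩ : Fin n)} := by
      ext i
      simp [Fin.ext_iff]
    rw [hset, Finset.sum_singleton]
    simp
  · refine Finset.sum_congr rfl fun i hi => ?_
    simp only [Finset.mem_filter] at hi
    rw [if_neg hi.2]
    ring

/-- A perfect fluid with energy density `ρ`, pressure `P` and normalized
four-velocity `v` satisfies the weak energy condition, i.e.
`(ρ+P) η(v,t)² + P η(t,t) ≥ 0` for all timelike `t`, iff `ρ ≥ 0` and `ρ + P ≥ 0`. -/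
theorem perfect_fluid_wec_iff
    (n : ℕ) (hn : 2 ≤ n) (v : Fin n → ℝ) (hv : minkowski v v = -1)
    (ρ P : ℝ) :
    (∀ t : Fin n → ℝ, minkowski t t < 0 →
        0 ≤ (ρ + P) * minkowski v t ^ 2 + P * minkowski t t)
      ↔ (0 ≤ ρ ∧ 0 ≤ ρ + P) := by
  have hn0 : 0 < n := by omega
  set i0 : Fin n := ⟨0, hn0⟩ with hi0
  set i1 : Fin n := ⟨1, by omega⟩ with hi1
  have hne01 : i0 ≠ i1 := by simp [hi0, hi1, Fin.ext_iff]
  set Sp : Finset (Fin n) := Finset.univ.filter (fun i : Fin n => (i : ℕ) ≠ 0) with hSp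
  have hi1mem : i1 ∈ Sp := by simp [hSp, hi1]
  -- spatial norm of v
  have hA2 : ∑ i ∈ Sp, v i * v i = v i0 ^ 2 - 1 := by
    have := mink_expand hn0 v v
    rw [hv] at this
    have : -(v i0 * v i0) + ∑ i ∈ Sp, v i * v i = -1 := this.symm
    nlinarith [this]
  have hA2nonneg : (0 : ℝ) ≤ ∑ i ∈ Sp, v i * v i :=
    Finset.sum_nonneg fun i _ => mul_self_nonneg _
  have hv1sq : v i1 * v i1 ≤ ∑ i ∈ Sp, v i * v i :=
    Finset.single_le_sum (fun i _ => mul_self_nonneg (v i)) hi1mem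
  have hv0sq : 1 ≤ v i0 ^ 2 := by nlinarith
  constructor
  · intro h
    -- ρ ≥ 0 : take t = v
    have hρ : 0 ≤ ρ := by
      have := h v (by rw [hv]; norm_num)
      rw [hv] at this
      nlinarith [this]
    refine ⟨hρ, ?_⟩
    -- construct a null vector u with minkowski v u < 0
    set ε : ℝ := if 0 < v i0 then 1 else -1 with hε
    have hε2 : ε ^ 2 = 1 := by rw [hε]; split_ifs <;> norm_num
    set u : Fin n → ℝ := fun i => if (i : ℕ) = 0 then ε else if (i : ℕ) = 1 then 1 else 0
      with hu
    have hu0 : u i0 = ε := by simp [hu, hi0]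
    have hu1 : u i1 = 1 := by simp [hu, hi1]
    -- spatial sums involving u
    have hSuu : ∑ i ∈ Sp, u i * u i = 1 := by
      have key : ∀ i ∈ Sp, u i * u i = if i = i1 then 1 else 0 := by
        intro i hi
        simp only [hSp, Finset.mem_filter] at hi
        by_cases h1 : (i : ℕ) = 1
        · have : i = i1 := Fin.ext (by simp [hi1, h1])
          simp [this, hu, hi1]
        · have : i ≠ i1 := by
            intro hcontra; exact h1 (by simp [hcontra, hi1])
          simp [this, hu, hi.2, h1]
      rw [Finset.sum_congr rfl key, Finset.sum_ite_eq' Sp i1 (fun _ => (1 : ℝ))]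
      simp [hi1mem]
    have hSvu : ∑ i ∈ Sp, v i * u i = v i1 := by
      have key : ∀ i ∈ Sp, v i * u i = if i = i1 then v i1 else 0 := by
        intro i hi
        simp only [hSp, Finset.mem_filter] at hi
        by_cases h1 : (i : ℕ) = 1
        · have hii : i = i1 := Fin.ext (by simp [hi1, h1])
          simp [hii, hu, hi1]
        · have : i ≠ i1 := by
            intro hcontra; exact h1 (by simp [hcontra, hi1])
          simp [this, hu, hi.2, h1]
      rw [Finset.sum_congr rfl key, Finset.sum_ite_eq' Sp i1 (fun _ => v i1)]
      simp [hi1mem]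
    have huu : minkowski u u = 0 := by
      rw [mink_expand hn0 u u]
      show -(u i0 * u i0) + ∑ i ∈ Sp, u i * u i = 0
      rw [hu0, hSuu]; nlinarith [hε2]
    set k : ℝ := minkowski v u with hkdef
    have hk : k = -(v i0 * ε) + v i1 := by
      rw [hkdef, mink_expand hn0 v u]
      show -(v i0 * u i0) + ∑ i ∈ Sp, v i * u i = _
      rw [hu0, hSvu]
    have hklt : k < 0 := by
      rw [hk, hε]
      split_ifs with hsign
      · nlinarith
      · have : v i0 < 0 := by nlinarith
        nlinarith
    -- WEC along t(s) = u + s v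
    have hwec : ∀ s : ℝ, 0 < s → 0 ≤ (ρ + P) * k ^ 2 + ρ * (s ^ 2 - 2 * k * s) := by
      intro s hs
      have htt : minkowski (fun i => u i + s * v i) (fun i => u i + s * v i)
          = 2 * s * k - s ^ 2 := by
        rw [mink_self_comb, huu, hv, mink_comm u v, ← hkdef]; ring
      have hvt : minkowski v (fun i => u i + s * v i) = k - s := by
        rw [mink_right_comb, hv, ← hkdef]; ring
      have hneg : minkowski (fun i => u i + s * v i) (fun i => u i + s * v i) < 0 := by
        rw [htt]; nlinarith
      have := h _ hneg
      rw [htt, hvt] at this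
      nlinarith [this]
    -- limiting argument
    by_contra hcon
    push_neg at hcon
    have hC : 0 < -((ρ + P) * k ^ 2) := by nlinarith [mul_pos (neg_pos.mpr hklt) (neg_pos.mpr hklt)]
    set C : ℝ := -((ρ + P) * k ^ 2) with hCdef
    rcases eq_or_lt_of_le hρ with hρ0 | hρpos
    · have := hwec 1 one_pos
      nlinarith [this]
    · set s : ℝ := min (-k) (C / (-6 * k * ρ)) with hsdef
      have hden : 0 < -6 * k * ρ := by nlinarith
      have hspos : 0 < s := lt_min (by linarith) (div_pos hC hden)
      have hs1 : s ≤ -k := min_le_left _ _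
      have hs2 : s ≤ C / (-6 * k * ρ) := min_le_right _ _
      have hs2' : s * (-6 * k * ρ) ≤ C := (le_div_iff₀ hden).mp hs2
      have := hwec s hspos
      -- s² − 2ks ≤ s(−3k) since s ≤ −k ; so ρ(s²−2ks) ≤ ρ·s·(−3k) ≤ C/2
      nlinarith [mul_pos hspos hspos, mul_le_mul_of_nonneg_left hs1 (le_of_lt hspos),
        mul_pos hρpos hspos]
  · rintro ⟨hρ, hρP⟩ t htt
    -- reverse Cauchy–Schwarz
    set a : ℝ := v i0
    set b : ℝ := t i0
    set c : ℝ := ∑ i ∈ Sp, v i * t i with hc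
    set B2 : ℝ := ∑ i ∈ Sp, t i * t i with hB2
    set A2 : ℝ := ∑ i ∈ Sp, v i * v i with hA2'
    have hmvt : minkowski v t = -(a * b) + c := mink_expand hn0 v t
    have hmtt : minkowski t t = -(b * b) + B2 := mink_expand hn0 t t
    have hB2nonneg : 0 ≤ B2 := Finset.sum_nonneg fun i _ => mul_self_nonneg _
    have hcs : c ^ 2 ≤ A2 * B2 := by
      have h1 := Finset.sum_mul_sq_le_sq_mul_sq Sp (fun i => v i) (fun i => t i)
      have e1 : ∑ i ∈ Sp, v i ^ 2 = A2 := by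
        rw [hA2']; exact Finset.sum_congr rfl fun i _ => sq (v i) ▸ by ring
      have e2 : ∑ i ∈ Sp, t i ^ 2 = B2 := by
        rw [hB2]; exact Finset.sum_congr rfl fun i _ => by ring
      rw [e1, e2] at h1
      exact h1
    have ha : A2 = a ^ 2 - 1 := hA2
    have hq : -(b * b) + B2 < 0 := by rw [← hmtt]; exact htt
    -- reverse CS : (−ab+c)² ≥ b² − B2
    have hrcs : b ^ 2 - B2 ≤ (-(a * b) + c) ^ 2 := by
      rcases eq_or_lt_of_le hA2nonneg with h0 | hpos
      · have hc0 : c ^ 2 ≤ 0 := by rw [← h0] at hcs; simpa using hcs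
        have hc00 : c = 0 := by
          have : c ^ 2 = 0 := le_antisymm hc0 (sq_nonneg c)
          exact pow_eq_zero_iff (by norm_num) |>.mp this
        rw [hc00]
        have ha1 : a ^ 2 = 1 := by linarith
        nlinarith [ha1, sq_nonneg b]
      · have ha' : a ^ 2 = A2 + 1 := by linarith
        have key : A2 * ((-(a * b) + c) ^ 2 - (b ^ 2 - B2))
            = (A2 * b - a * c) ^ 2 + (A2 * B2 - c ^ 2) := by
          linear_combination (A2 * b ^ 2 - c ^ 2) * ha'
        have hAE : 0 ≤ A2 * ((-(a * b) + c) ^ 2 - (b ^ 2 - B2)) := by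
          rw [key]; nlinarith [sq_nonneg (A2 * b - a * c)]
        nlinarith [hAE, hpos]
    rw [hmvt, hmtt]
    nlinarith [mul_nonneg hρP (by linarith [hrcs] : 0 ≤ (-(a * b) + c) ^ 2 + (-(b * b) + B2)),
      mul_nonneg hρ (le_of_lt (neg_pos.mpr hq))]
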